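/- Let X be a finite connected graph and let Q be the simple random walk kernel with stationary measure π(x) = d_x / Σ_v d_v, and let θ be the logarithmic mean. Assume the global gradient estimate with constant κ > 0 holds: for all probability densities ρ ∈ D(X), all f : X → ℝ and all t ≥ 0, (1/2)·Σ_{u,v} (P_t f(v) − P_t f(u))² θ(ρ(u),ρ(v)) Q(u,v) π(u) ≤ e^{−2κt} · (1/2)·Σ_{u,v} (f(v) − f(u))² θ(P_t ρ(u), P_t ρ(v)) Q(u,v) π(u). Then the combinatorial diameter of X satisfies diam(X) ≤ (2/κ)·√(D·log D/(D − 1)), where D ≥ 2 is the maximal vertex degree. -/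

import Mathlib

/-- The logarithmic mean: `θ(a,b) = (a-b)/(log a - log b)` for distinct positive `a,b`,
`θ(a,a) = a`, and `θ(a,b) = 0` when `a = 0` or `b = 0`. -/
noncomputable def logMean (a b : ℝ) : ℝ :=
  if a = 0 ∨ b = 0 then 0
  else if a = b then a
  else (a - b) / (Real.log a - Real.log b)

/-- The discrete Laplacian `Δf(x) = Σ_y (f(y)-f(x)) Q(x,y)`. -/
noncomputable def lap {X : Type*} [Fintype X] (Q : X → X → ℝ) (f : X → ℝ) (x : X) : ℝ :=
  ∑ y, (f y - f x) * Q x y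

/-- The heat semigroup `P_t = e^{tΔ}`, realized via the matrix exponential of `t•(Q - I)`.
(When `Σ_y Q(x,y) = 1`, the matrix `Q - I` acts on functions exactly as `Δ` does.) -/
noncomputable def heat {X : Type*} [Fintype X] [DecidableEq X] (Q : X → X → ℝ) (t : ℝ)
    (f : X → ℝ) : X → ℝ :=
  (NormedSpace.exp (t • (Matrix.of fun x y => Q x y - if x = y then (1 : ℝ) else 0))).mulVec f

/-- The carré du champ operator `Γ(f)(x) = Σ_y (f(y)-f(x))² Q(x,y)`. -/
noncomputable def gam {X : Type*} [Fintype X] (Q : X → X → ℝ) (f : X → ℝ) (x : X) : ℝ :=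
  ∑ y, (f y - f x) ^ 2 * Q x y

/-! ### Auxiliary lemmas on the logarithmic mean -/

lemma key_log (r : ℝ) (hr : 1 ≤ r) : 2 * (r - 1) ≤ (r + 1) * Real.log r := by
  have h1 : ∀ s ∈ Set.Ici (1:ℝ), HasDerivAt (fun x => (x + 1) * Real.log x - 2 * (x - 1))
      (Real.log s + (s + 1) / s - 2) s := by
    intro s hs
    have hs0 : 0 < s := lt_of_lt_of_le one_pos hs
    have h := (((hasDerivAt_id s).add_const 1).mul (Real.hasDerivAt_log hs0.ne')).sub
      (((hasDerivAt_id s).sub_const 1).const_mul 2)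
    refine h.congr_deriv (Eq.symm ?_)
    field_simp
    rfl
  have hmono : MonotoneOn (fun x => (x + 1) * Real.log x - 2 * (x - 1)) (Set.Ici 1) := by
    apply monotoneOn_of_deriv_nonneg (convex_Ici 1)
    · exact continuousOn_of_forall_continuousAt fun s hs => (h1 s hs).continuousAt
    · intro s hs
      rw [interior_Ici] at hs
      exact (h1 s (Set.mem_Ici.mpr (le_of_lt hs))).differentiableAt.differentiableWithinAt
    · intro s hs
      rw [interior_Ici] at hs
      rw [(h1 s (Set.mem_Ici.mpr (le_of_lt hs))).deriv]
      have hs0 : (0:ℝ) < s := lt_trans one_pos hs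
      have hlog : 1 - 1/s ≤ Real.log s := by
        have := Real.log_le_sub_one_of_pos (x := 1/s) (by positivity)
        rw [Real.log_div one_ne_zero hs0.ne', Real.log_one] at this
        linarith
      have : (s+1)/s = 1 + 1/s := by field_simp
      linarith
  have := hmono (Set.self_mem_Ici) (Set.mem_Ici.mpr hr) hr
  simp at this
  linarith

lemma logMean_symm (a b : ℝ) : logMean a b = logMean b a := by
  unfold logMean
  rcases eq_or_ne a b with rfl | hab
  · simp
  by_cases h0 : a = 0 ∨ b = 0
  · rw [if_pos h0, if_pos (Or.symm h0)]
  · rw [if_neg h0, if_neg (fun h => h0 (Or.symm h)), if_neg hab, if_neg (Ne.symm hab),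
      ← neg_sub b a, ← neg_sub (Real.log b), neg_div_neg_eq]

lemma logMean_nonneg {a b : ℝ} (ha : 0 ≤ a) (hb : 0 ≤ b) : 0 ≤ logMean a b := by
  unfold logMean
  split_ifs with h1 h2
  · exact le_rfl
  · exact ha
  · push_neg at h1
    have ha' : 0 < a := ha.lt_of_ne (Ne.symm h1.1)
    have hb' : 0 < b := hb.lt_of_ne (Ne.symm h1.2)
    rcases lt_or_gt_of_ne h2 with h | h
    · have : Real.log a < Real.log b := Real.log_lt_log ha' h
      apply div_nonneg_of_nonpos <;> linarith
    · have : Real.log b < Real.log a := Real.log_lt_log hb' h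
      apply div_nonneg <;> linarith

lemma logMean_le_half_add {a b : ℝ} (ha : 0 ≤ a) (hb : 0 ≤ b) :
    logMean a b ≤ (a + b) / 2 := by
  have main : ∀ x y : ℝ, 0 < y → y < x → logMean x y ≤ (x + y) / 2 := by
    intro x y hy hxy
    have hx : 0 < x := lt_trans hy hxy
    unfold logMean
    rw [if_neg (by push_neg; exact ⟨hx.ne', hy.ne'⟩), if_neg (ne_of_gt hxy)]
    have hlog : Real.log x - Real.log y = Real.log (x / y) := by
      rw [Real.log_div hx.ne' hy.ne']
    have hr : 1 ≤ x / y := by rw [le_div_iff₀ hy]; linarith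
    have hlogpos : 0 < Real.log x - Real.log y := by
      rw [sub_pos]; exact Real.log_lt_log hy hxy
    rw [div_le_iff₀ hlogpos]
    rw [hlog]
    have expand : x - y = y * (x/y - 1) := by field_simp
    have expand2 : x + y = y * (x/y + 1) := by field_simp
    rw [expand, expand2]
    calc y * (x/y - 1) ≤ y * ((x/y + 1) * Real.log (x/y) / 2) := by
          apply mul_le_mul_of_nonneg_left _ hy.le
          linarith [key_log (x/y) hr]
      _ = y * (x/y + 1) / 2 * Real.log (x/y) := by ring
  rcases eq_or_ne a 0 with rfl | ha0
  · unfold logMean; simp; positivity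
  rcases eq_or_ne b 0 with rfl | hb0
  · unfold logMean; simp; positivity
  rcases lt_trichotomy a b with h | rfl | h
  · rw [logMean_symm]
    have := main b a (ha.lt_of_ne (Ne.symm ha0)) h
    linarith
  · unfold logMean; rw [if_neg (by push_neg; exact ⟨ha0, ha0⟩), if_pos rfl]; linarith
  · exact main a b (hb.lt_of_ne (Ne.symm hb0)) h

lemma logMean_div (a c : ℝ) (ha : 0 < a) (hc : 1 < c) :
    logMean a (a / c) = (a - a / c) / Real.log c := by
  have hc0 : (0:ℝ) < c := lt_trans one_pos hc
  have hac : 0 < a / c := by positivity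
  have hne : a ≠ a / c := by
    intro h
    rw [eq_div_iff hc0.ne'] at h
    nlinarith
  unfold logMean
  rw [if_neg (by push_neg; exact ⟨ha.ne', hac.ne'⟩), if_neg hne]
  congr 1
  rw [Real.log_div ha.ne' hc0.ne']
  ring

/-! ### Auxiliary lemmas on the heat semigroup -/

section Heat

variable {X : Type*} [Fintype X] [DecidableEq X]

lemma linear_exp_eq (φ : Matrix X X ℝ →ₗ[ℝ] ℝ) (A : Matrix X X ℝ) :
    φ (NormedSpace.exp A) = ∑' n : ℕ, φ ((((n.factorial : ℝ))⁻¹) • A ^ n) := by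
  letI : SeminormedRing (Matrix X X ℝ) := Matrix.linftyOpSemiNormedRing
  letI : NormedRing (Matrix X X ℝ) := Matrix.linftyOpNormedRing
  letI : NormedAlgebra ℝ (Matrix X X ℝ) := Matrix.linftyOpNormedAlgebra
  let ψ := LinearMap.toContinuousLinearMap φ
  have hsum : Summable fun n : ℕ => (((n.factorial : ℝ))⁻¹) • A ^ n :=
    NormedSpace.expSeries_summable' (𝕂 := ℝ) A
  have h1 : NormedSpace.exp A = ∑' n : ℕ, (((n.factorial : ℝ))⁻¹) • A ^ n := by
    rw [NormedSpace.exp_eq_tsum ℝ]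
  calc φ (NormedSpace.exp A) = ψ (∑' n : ℕ, (((n.factorial : ℝ))⁻¹) • A ^ n) := by
        rw [← h1]; rfl
    _ = ∑' n : ℕ, ψ ((((n.factorial : ℝ))⁻¹) • A ^ n) := ψ.map_tsum hsum
    _ = ∑' n : ℕ, φ ((((n.factorial : ℝ))⁻¹) • A ^ n) := rfl

/-- entry evaluation linear map -/
def entryLM (i j : X) : Matrix X X ℝ →ₗ[ℝ] ℝ where
  toFun M := M i j
  map_add' _ _ := rfl
  map_smul' _ _ := rfl

lemma pow_entry_nonneg {A : Matrix X X ℝ} (hA : ∀ i j, 0 ≤ A i j) (n : ℕ) :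
    ∀ i j, 0 ≤ (A ^ n) i j := by
  induction n with
  | zero => intro i j; rw [pow_zero]; by_cases h : i = j <;> simp [Matrix.one_apply, h]
  | succ n ih =>
    intro i j
    rw [pow_succ, Matrix.mul_apply]
    exact Finset.sum_nonneg fun k _ => mul_nonneg (ih i k) (hA k j)

lemma exp_entry_nonneg {A : Matrix X X ℝ} (hA : ∀ i j, 0 ≤ A i j) (i j : X) :
    0 ≤ (NormedSpace.exp A) i j := by
  have h : (NormedSpace.exp A) i j = ∑' n : ℕ, (((n.factorial : ℝ))⁻¹) * ((A ^ n) i j) :=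
    linear_exp_eq (entryLM i j) A
  rw [h]
  exact tsum_nonneg fun n => mul_nonneg (by positivity) (pow_entry_nonneg hA n i j)

lemma smul_one_exp (c : ℝ) :
    NormedSpace.exp (c • (1 : Matrix X X ℝ)) = Real.exp c • (1 : Matrix X X ℝ) := by
  rw [Matrix.smul_one_eq_diagonal, Matrix.exp_diagonal, Pi.exp_def]
  rw [Matrix.smul_one_eq_diagonal]
  congr 1
  funext _
  rw [← Real.exp_eq_exp_ℝ]

lemma heatMat_split (Q : X → X → ℝ) (t : ℝ) :
    NormedSpace.exp (t • (Matrix.of fun x y => Q x y - if x = y then (1 : ℝ) else 0))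
      = Real.exp (-t) • NormedSpace.exp (t • (Matrix.of fun x y => Q x y)) := by
  have hsplit : t • (Matrix.of fun x y => Q x y - if x = y then (1 : ℝ) else 0)
      = t • (Matrix.of fun x y => Q x y) + (-t) • (1 : Matrix X X ℝ) := by
    ext i j
    by_cases h : i = j <;> simp [Matrix.one_apply, h, Matrix.of_apply] <;> ring
  rw [hsplit, Matrix.exp_add_of_commute _ _
    (((Commute.one_right (t • (Matrix.of fun x y => Q x y))).smul_right (-t))),
    smul_one_exp, mul_smul_comm, mul_one]

lemma heatMat_entry_nonneg (Q : X → X → ℝ) (hQ : ∀ i j, 0 ≤ Q i j) {t : ℝ} (ht : 0 ≤ t)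
    (i j : X) :
    0 ≤ (NormedSpace.exp
      (t • (Matrix.of fun x y => Q x y - if x = y then (1 : ℝ) else 0))) i j := by
  rw [heatMat_split]
  have h1 : 0 ≤ (NormedSpace.exp (t • (Matrix.of fun x y => Q x y))) i j :=
    exp_entry_nonneg (fun i j => by simpa using mul_nonneg ht (hQ i j)) i j
  have h2 : (Real.exp (-t) • NormedSpace.exp (t • (Matrix.of fun x y => Q x y))) i j
      = Real.exp (-t) * (NormedSpace.exp (t • (Matrix.of fun x y => Q x y))) i j := rfl
  rw [h2]
  positivity

lemma heat_nonneg (Q : X → X → ℝ) (hQ : ∀ i j, 0 ≤ Q i j) {t : ℝ} (ht : 0 ≤ t)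
    {ρ : X → ℝ} (hρ : ∀ i, 0 ≤ ρ i) (z : X) : 0 ≤ heat Q t ρ z := by
  unfold heat
  rw [Matrix.mulVec]
  exact Finset.sum_nonneg fun w _ =>
    mul_nonneg (heatMat_entry_nonneg Q hQ ht z w) (hρ w)

lemma vecMul_exp_eq {π : X → ℝ} {A : Matrix X X ℝ} (h : Matrix.vecMul π A = 0) (w : X) :
    Matrix.vecMul π (NormedSpace.exp A) w = π w := by
  have φdef : ∀ (M : Matrix X X ℝ), Matrix.vecMul π M w = ∑ u, π u * M u w := by
    intro M; rfl
  let φ : Matrix X X ℝ →ₗ[ℝ] ℝ :=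
    { toFun := fun M => Matrix.vecMul π M w
      map_add' := by intro M N; simp [φdef, Matrix.add_apply, mul_add, Finset.sum_add_distrib]
      map_smul' := by intro c M; simp [φdef, Finset.mul_sum]; congr 1; funext u; ring }
  have key : ∀ n : ℕ, n ≠ 0 → Matrix.vecMul π (A ^ n) = 0 := by
    intro n hn
    induction n with
    | zero => exact absurd rfl hn
    | succ m ih =>
      rcases Nat.eq_zero_or_pos m with rfl | hm
      · simpa using h
      · rw [pow_succ, ← Matrix.vecMul_vecMul, ih hm.ne', Matrix.zero_vecMul]
  have h1 := linear_exp_eq φ A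
  have h2 : ∀ n : ℕ, φ ((((n.factorial : ℝ))⁻¹) • A ^ n) = if n = 0 then π w else 0 := by
    intro n
    rcases eq_or_ne n 0 with rfl | hn
    · simp [φ, Matrix.vecMul_smul]
    · have hz : Matrix.vecMul π (A ^ n) w = 0 := by rw [key n hn]; rfl
      simp only [φ, LinearMap.coe_mk, AddHom.coe_mk, if_neg hn]
      rw [φdef]
      have he : ∀ u, π u * ((((n.factorial : ℝ))⁻¹ • A ^ n) u w)
          = ((n.factorial : ℝ))⁻¹ * (π u * (A ^ n) u w) := by
        intro u; rw [Matrix.smul_apply]; rw [smul_eq_mul]; ring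
      simp only [he]
      rw [← Finset.mul_sum, ← φdef, hz, mul_zero]
  have h3 : φ (NormedSpace.exp A) = π w := by
    rw [h1]
    rw [tsum_eq_single 0 (fun n hn => by rw [h2 n]; simp [hn])]
    rw [h2 0]; simp
  exact h3

lemma vecMul_smul_matrix (π : X → ℝ) (c : ℝ) (A : Matrix X X ℝ) :
    Matrix.vecMul π (c • A) = c • Matrix.vecMul π A := by
  funext v
  show (∑ u, π u * (c • A) u v) = c • ∑ u, π u * A u v
  simp only [Matrix.smul_apply, smul_eq_mul, Finset.mul_sum]
  exact Finset.sum_congr rfl fun u _ => by ring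

lemma heat_zero (Q : X → X → ℝ) (f : X → ℝ) : heat Q 0 f = f := by
  unfold heat
  rw [zero_smul, NormedSpace.exp_zero, Matrix.one_mulVec]

lemma heat_hasDerivAt (Q : X → X → ℝ) (hrow : ∀ z, ∑ w, Q z w = 1) (f : X → ℝ) (z : X)
    (t : ℝ) :
    HasDerivAt (fun s => heat Q s f z)
      (∑ w, (heat Q t f w - heat Q t f z) * Q z w) t := by
  letI : SeminormedRing (Matrix X X ℝ) := Matrix.linftyOpSemiNormedRing
  letI : NormedRing (Matrix X X ℝ) := Matrix.linftyOpNormedRing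
  letI : NormedAlgebra ℝ (Matrix X X ℝ) := Matrix.linftyOpNormedAlgebra
  set A : Matrix X X ℝ := Matrix.of fun x y => Q x y - if x = y then (1 : ℝ) else 0 with hA
  have hd : HasDerivAt (fun s : ℝ => NormedSpace.exp (s • A))
      (A * NormedSpace.exp (t • A)) t := hasDerivAt_exp_smul_const' (𝕂 := ℝ) A t
  let φ : Matrix X X ℝ →ₗ[ℝ] ℝ :=
    { toFun := fun M => M.mulVec f z
      map_add' := by
        intro M N
        simp [Matrix.mulVec, dotProduct, Matrix.add_apply, add_mul,
          Finset.sum_add_distrib]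
      map_smul' := by
        intro c M
        simp [Matrix.mulVec, dotProduct, Matrix.smul_apply, Finset.mul_sum,
          smul_eq_mul, mul_assoc] }
  let ψ := LinearMap.toContinuousLinearMap φ
  have hc : HasDerivAt (fun s : ℝ => ψ (NormedSpace.exp (s • A)))
      (ψ (A * NormedSpace.exp (t • A))) t := by
    exact ψ.hasFDerivAt.comp_hasDerivAt t hd
  have hident : ψ (A * NormedSpace.exp (t • A))
      = ∑ w, (heat Q t f w - heat Q t f z) * Q z w := by
    have h1 : ψ (A * NormedSpace.exp (t • A))
        = (A.mulVec (heat Q t f)) z := by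
      show ((A * NormedSpace.exp (t • A)).mulVec f) z = _
      rw [← Matrix.mulVec_mulVec]
      rfl
    have h2 : (A.mulVec (heat Q t f)) z
        = ∑ w, (Q z w - if z = w then 1 else 0) * heat Q t f w := by
      rfl
    have h3 : ∑ w, (Q z w - if z = w then 1 else 0) * heat Q t f w
        = (∑ w, Q z w * heat Q t f w) - heat Q t f z := by
      have hsplit : ∀ w, (Q z w - if z = w then 1 else 0) * heat Q t f w
          = Q z w * heat Q t f w - (if z = w then heat Q t f w else 0) := by
        intro w; split_ifs <;> ring
      rw [Finset.sum_congr rfl (fun w _ => hsplit w), Finset.sum_sub_distrib,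
        Finset.sum_ite_eq Finset.univ z (fun w => heat Q t f w)]
      simp
    have h4 : ∑ w, (heat Q t f w - heat Q t f z) * Q z w
        = (∑ w, Q z w * heat Q t f w) - heat Q t f z := by
      have hsplit : ∀ w, (heat Q t f w - heat Q t f z) * Q z w
          = Q z w * heat Q t f w - heat Q t f z * Q z w := by
        intro w; ring
      rw [Finset.sum_congr rfl (fun w _ => hsplit w), Finset.sum_sub_distrib,
        ← Finset.mul_sum, hrow z, mul_one]
    calc ψ (A * NormedSpace.exp (t • A)) = (A.mulVec (heat Q t f)) z := h1
      _ = ∑ w, (Q z w - if z = w then 1 else 0) * heat Q t f w := h2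
      _ = ∑ w, (heat Q t f w - heat Q t f z) * Q z w := h3.trans h4.symm
  exact hident ▸ hc

end Heat

/-- bound along a walk -/
lemma walk_abs_bound {X : Type*} {G : SimpleGraph X} (g : X → ℝ) (c : ℝ)
    (hg : ∀ u v : X, G.Adj u v → |g v - g u| ≤ c) :
    ∀ {u v : X} (p : G.Walk u v), |g v - g u| ≤ p.length * c := by
  intro u v p
  induction p with
  | nil => simp
  | @cons a b w h q ih =>
    have h1 : |g w - g a| ≤ |g w - g b| + |g b - g a| := abs_sub_le _ _ _
    have h2 : |g b - g a| ≤ c := hg a b h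
    have hlen : ((SimpleGraph.Walk.cons h q).length : ℝ) = (q.length : ℝ) + 1 := by
      rw [SimpleGraph.Walk.length_cons]; push_cast; ring
    rw [hlen]
    calc |g w - g a| ≤ |g w - g b| + |g b - g a| := h1
      _ ≤ q.length * c + c := add_le_add ih h2
      _ = ((q.length : ℝ) + 1) * c := by ring

set_option maxHeartbeats 2000000 in
/-- **Bonnet–Myers type diameter bound**: if the simple random walk on a finite connected
graph satisfies the global gradient estimate with constant `κ > 0` (i.e. has entropic
Ricci curvature at least `κ`), then `diam(X) ≤ (2/κ)·√(D·log D/(D-1))`. -/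
theorem diameter_bound_entropic
    {X : Type*} [Fintype X] [DecidableEq X]
    (G : SimpleGraph X) [DecidableRel G.Adj] (hconn : G.Connected)
    (Q : X → X → ℝ) (π : X → ℝ) (κ : ℝ) (hκ : 0 < κ)
    (hQ : ∀ x y, Q x y = if G.Adj x y then ((G.degree x : ℝ))⁻¹ else 0)
    (hπ : ∀ x, π x = (G.degree x : ℝ) / ∑ v, (G.degree v : ℝ))
    (D : ℕ) (hD : D = Finset.univ.sup fun x => G.degree x) (hD2 : 2 ≤ D)
    (hGE : ∀ ρ : X → ℝ, (∀ z, 0 ≤ ρ z) → ∑ z, ρ z * π z = 1 → ∀ f : X → ℝ, ∀ t : ℝ, 0 ≤ t →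
      (1 / 2) * ∑ u, ∑ v,
          (heat Q t f v - heat Q t f u) ^ 2 * logMean (ρ u) (ρ v) * Q u v * π u ≤
        Real.exp (-2 * κ * t) * ((1 / 2) * ∑ u, ∑ v,
          (f v - f u) ^ 2 * logMean (heat Q t ρ u) (heat Q t ρ v) * Q u v * π u)) :
    (G.diam : ℝ) ≤ (2 / κ) * Real.sqrt (D * Real.log D / ((D : ℝ) - 1)) := by
  by_cases hdiam : G.diam = 0
  · rw [hdiam]
    push_cast
    positivity
  -- nontrivial setup
  have hnt : Nontrivial X := G.nontrivial_of_diam_ne_zero hdiam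
  have hdegpos : ∀ z : X, 0 < G.degree z := by
    intro z
    rw [SimpleGraph.degree_pos_iff_exists_adj]
    obtain ⟨w, hw⟩ := exists_ne z
    obtain ⟨p⟩ := hconn.preconnected z w
    cases p with
    | nil => exact absurd rfl hw
    | cons h q => exact ⟨_, h⟩
  set S : ℝ := ∑ v, (G.degree v : ℝ) with hS
  have hSpos : 0 < S := by
    apply Finset.sum_pos _ Finset.univ_nonempty
    intro v _
    exact_mod_cast hdegpos v
  have hπpos : ∀ z, 0 < π z := by
    intro z
    rw [hπ z]
    apply div_pos _ hSpos
    exact_mod_cast hdegpos z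
  have hQnn : ∀ u v, 0 ≤ Q u v := by
    intro u v
    rw [hQ]
    split_ifs
    · positivity
    · exact le_rfl
  have hrow : ∀ z, ∑ w, Q z w = 1 := by
    intro z
    have : ∀ w, Q z w = if w ∈ G.neighborFinset z then ((G.degree z : ℝ))⁻¹ else 0 := by
      intro w
      by_cases h : G.Adj z w <;> simp [hQ, h]
    rw [Finset.sum_congr rfl fun w _ => this w, Finset.sum_ite_mem,
      Finset.univ_inter, Finset.sum_const, SimpleGraph.card_neighborFinset_eq_degree]
    have : (G.degree z : ℝ) ≠ 0 := by exact_mod_cast (hdegpos z).ne'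
    rw [nsmul_eq_mul, mul_inv_cancel₀ this]
  have hrev : ∀ u v, Q u v * π u = Q v u * π v := by
    intro u v
    rw [hQ, hQ, hπ, hπ]
    by_cases h : G.Adj u v
    · rw [if_pos h, if_pos h.symm]
      have hu : (G.degree u : ℝ) ≠ 0 := by exact_mod_cast (hdegpos u).ne'
      have hv : (G.degree v : ℝ) ≠ 0 := by exact_mod_cast (hdegpos v).ne'
      field_simp
    · rw [if_neg h, if_neg fun h' => h h'.symm]
      ring
  have hπinv : ∀ v, ∑ u, π u * Q u v = π v := by
    intro v
    have : ∀ u, π u * Q u v = Q v u * π v := by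
      intro u; rw [mul_comm, hrev u v]
    rw [Finset.sum_congr rfl fun u _ => this u, ← Finset.sum_mul, hrow v, one_mul]
  have hvecA : Matrix.vecMul π
      (Matrix.of fun x y => Q x y - if x = y then (1:ℝ) else 0) = 0 := by
    funext v
    have h1 : Matrix.vecMul π (Matrix.of fun x y => Q x y - if x = y then (1:ℝ) else 0) v
        = ∑ u, π u * (Q u v - if u = v then 1 else 0) := rfl
    rw [h1]
    have h2 : ∀ u, π u * (Q u v - if u = v then 1 else 0)
        = π u * Q u v - (if u = v then π u else 0) := by
      intro u; split_ifs <;> ring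
    rw [Finset.sum_congr rfl fun u _ => h2 u, Finset.sum_sub_distrib, hπinv v,
      Finset.sum_ite_eq' Finset.univ v (fun u => π u)]
    simp
  have hmean : ∀ {t : ℝ}, 0 ≤ t → ∀ ρ : X → ℝ, ∑ u, heat Q t ρ u * π u = ∑ u, ρ u * π u := by
    intro t ht ρ
    have hE : ∀ w, Matrix.vecMul π (NormedSpace.exp
        (t • (Matrix.of fun x y => Q x y - if x = y then (1:ℝ) else 0))) w = π w := by
      intro w
      apply vecMul_exp_eq
      rw [vecMul_smul_matrix, hvecA, smul_zero]
    set E := NormedSpace.exp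
        (t • (Matrix.of fun x y => Q x y - if x = y then (1:ℝ) else 0)) with hEdef
    have h1 : ∀ u, heat Q t ρ u = ∑ w, E u w * ρ w := fun u => rfl
    calc ∑ u, heat Q t ρ u * π u = ∑ u, ∑ w, π u * E u w * ρ w := by
          apply Finset.sum_congr rfl
          intro u _
          rw [h1 u, Finset.sum_mul]
          apply Finset.sum_congr rfl
          intro w _
          ring
      _ = ∑ w, (∑ u, π u * E u w) * ρ w := by
          rw [Finset.sum_comm]
          apply Finset.sum_congr rfl
          intro w _
          rw [Finset.sum_mul]
      _ = ∑ w, π w * ρ w := by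
          apply Finset.sum_congr rfl
          intro w _
          have : ∑ u, π u * E u w = π w := hE w
          rw [this]
      _ = ∑ u, ρ u * π u := by
          apply Finset.sum_congr rfl
          intro w _
          ring
  -- numerics on D
  have hDdeg : ∀ z, (G.degree z : ℝ) ≤ (D : ℝ) := by
    intro z
    have h : G.degree z ≤ D := by
      rw [hD]
      exact Finset.le_sup (f := fun x => G.degree x) (Finset.mem_univ z)
    exact_mod_cast h
  have hD1 : (1:ℝ) < (D:ℝ) := by
    have : (2:ℝ) ≤ (D:ℝ) := by exact_mod_cast hD2
    linarith
  have hDpos : (0:ℝ) < (D:ℝ) := lt_trans one_pos hD1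
  have hlogD : 0 < Real.log D := Real.log_pos hD1
  set M : ℝ := (D : ℝ) * Real.log D / ((D : ℝ) - 1) with hM
  have hMpos : 0 < M := by
    apply div_pos (by positivity)
    linarith
  -- the core gradient bound
  have core : ∀ (f : X → ℝ), (∀ u v : X, G.Adj u v → (f v - f u)^2 ≤ 1) →
      ∀ (z : X) (t : ℝ), 0 ≤ t →
      ∑ v, (heat Q t f v - heat Q t f z)^2 * Q z v ≤ Real.exp (-2*κ*t) * M := by
    intro f hLip z t ht
    set B : ℝ := ∑ y ∈ G.neighborFinset z, π y with hB
    have hBnn : 0 ≤ B := Finset.sum_nonneg fun y _ => (hπpos y).le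
    have hBle : B ≤ (D:ℝ) * π z := by
      have h1 : B ≤ ∑ _y ∈ G.neighborFinset z, (D:ℝ) / S := by
        apply Finset.sum_le_sum
        intro y _
        rw [hπ y]
        gcongr
        exact_mod_cast hDdeg y
      have h2 : ∑ _y ∈ G.neighborFinset z, (D:ℝ) / S = (G.degree z : ℝ) * ((D:ℝ)/S) := by
        rw [Finset.sum_const, SimpleGraph.card_neighborFinset_eq_degree, nsmul_eq_mul]
      have h3 : (G.degree z : ℝ) * ((D:ℝ)/S) = (D:ℝ) * π z := by
        rw [hπ z]; ring
      linarith
    set denom : ℝ := π z + B / D with hdenom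
    have hdenompos : 0 < denom := by
      have : 0 ≤ B / D := by positivity
      have := hπpos z
      rw [hdenom]; linarith
    set a : ℝ := 1 / denom with ha
    have hapos : 0 < a := by rw [ha]; positivity
    have hdenomle : denom ≤ 2 * π z := by
      have hBD : B / D ≤ π z := by
        rw [div_le_iff₀ hDpos]
        calc B ≤ (D:ℝ) * π z := hBle
          _ = π z * D := by ring
      rw [hdenom]; linarith
    have haπ : 1 / 2 ≤ a * π z := by
      have : a * π z = π z / denom := by rw [ha]; ring
      rw [this, le_div_iff₀ hdenompos]
      have h2πz : 1/2 * (2 * π z) = π z := by ring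
      calc 1/2 * denom ≤ 1/2 * (2 * π z) := by
            apply mul_le_mul_of_nonneg_left hdenomle (by norm_num)
        _ = π z := h2πz
    set ρ : X → ℝ := fun v => if v = z then a else if G.Adj z v then a / D else 0 with hρ
    have hρnn : ∀ v, 0 ≤ ρ v := by
      intro v
      rw [hρ]
      dsimp only
      split_ifs
      · exact hapos.le
      · positivity
      · exact le_rfl
    have hρz : ρ z = a := if_pos rfl
    have hρadj : ∀ v, G.Adj z v → ρ v = a / D := by
      intro v hv
      have hne : v ≠ z := hv.ne'
      rw [hρ]
      dsimp only
      rw [if_neg hne, if_pos hv]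
    have hnorm : ∑ v, ρ v * π v = 1 := by
      have hsplit : ∀ v, ρ v * π v
          = (if v = z then a * π z else 0) + (if G.Adj z v then (a / D) * π v else 0) := by
        intro v
        by_cases h1 : v = z
        · subst h1
          rw [hρz, if_pos rfl, if_neg (G.irrefl), add_zero]
        · rw [if_neg h1]
          by_cases h2 : G.Adj z v
          · rw [hρadj v h2, if_pos h2, zero_add]
          · rw [if_neg h2]
            have : ρ v = 0 := by rw [hρ]; dsimp only; rw [if_neg h1, if_neg h2]
            rw [this, zero_mul, add_zero]
      rw [Finset.sum_congr rfl fun v _ => hsplit v, Finset.sum_add_distrib]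
      have e1 : ∑ v, (if v = z then a * π z else 0) = a * π z := by
        rw [Finset.sum_ite_eq' Finset.univ z (fun _ => a * π z)]
        simp
      have e2 : ∑ v, (if G.Adj z v then (a / D) * π v else 0) = (a / D) * B := by
        rw [hB, Finset.mul_sum, SimpleGraph.neighborFinset_eq_filter, Finset.sum_filter]
      rw [e1, e2]
      have e3 : a * π z + a / D * B = a * denom := by rw [hdenom]; ring
      rw [e3, ha, one_div, inv_mul_cancel₀ hdenompos.ne']
    have key := hGE ρ hρnn hnorm f t ht
    set θ : ℝ := logMean a (a / (D:ℝ)) with hθdef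
    have hθeq : θ = (a - a / D) / Real.log D := logMean_div a D hapos hD1
    have hθπ : ((D:ℝ) - 1) / (2 * ((D:ℝ) * Real.log D)) ≤ θ * π z := by
      have h1 : θ * π z = (a * π z) * (((D:ℝ)-1) / ((D:ℝ) * Real.log D)) := by
        rw [hθeq]
        field_simp
      rw [h1]
      have h2 : ((D:ℝ)-1)/(2 * ((D:ℝ) * Real.log D))
          = (1/2) * (((D:ℝ)-1)/((D:ℝ) * Real.log D)) := by ring
      rw [h2]
      apply mul_le_mul_of_nonneg_right haπ
      apply div_nonneg _ (by positivity)
      linarith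
    -- LHS extraction
    have hLHS : θ * π z * (∑ v, (heat Q t f v - heat Q t f z)^2 * Q z v)
        ≤ 1/2 * ∑ u, ∑ v,
          (heat Q t f v - heat Q t f u)^2 * logMean (ρ u) (ρ v) * Q u v * π u := by
      set T : X → X → ℝ := fun u v =>
        (heat Q t f v - heat Q t f u)^2 * logMean (ρ u) (ρ v) * Q u v * π u with hT
      have hTnn : ∀ u v, 0 ≤ T u v := by
        intro u v
        exact mul_nonneg (mul_nonneg (mul_nonneg (sq_nonneg _)
          (logMean_nonneg (hρnn u) (hρnn v))) (hQnn u v)) (hπpos u).le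
      have hTzz : T z z = 0 := by
        show (heat Q t f z - heat Q t f z)^2 * _ * _ * _ = 0
        simp
      have step3 : ∑ v, T z v
          = θ * π z * (∑ v, (heat Q t f v - heat Q t f z)^2 * Q z v) := by
        rw [Finset.mul_sum]
        apply Finset.sum_congr rfl
        intro v _
        show (heat Q t f v - heat Q t f z)^2 * logMean (ρ z) (ρ v) * Q z v * π z = _
        by_cases hadj : G.Adj z v
        · rw [hρz, hρadj v hadj, hθdef]
          ring
        · have hq0 : Q z v = 0 := by rw [hQ]; exact if_neg hadj
          rw [hq0]
          ring
      have step2 : ∀ u, T u z = T z u := by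
        intro u
        show (heat Q t f z - heat Q t f u)^2 * logMean (ρ u) (ρ z) * Q u z * π u
          = (heat Q t f u - heat Q t f z)^2 * logMean (ρ z) (ρ u) * Q z u * π z
        calc (heat Q t f z - heat Q t f u)^2 * logMean (ρ u) (ρ z) * Q u z * π u
            = (heat Q t f u - heat Q t f z)^2 * logMean (ρ z) (ρ u) * (Q u z * π u) := by
              rw [logMean_symm (ρ u) (ρ z)]
              ring
          _ = (heat Q t f u - heat Q t f z)^2 * logMean (ρ z) (ρ u) * (Q z u * π z) := by
              rw [hrev u z]
          _ = (heat Q t f u - heat Q t f z)^2 * logMean (ρ z) (ρ u) * Q z u * π z := by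
              ring
      have e1 : ∑ u, ∑ v, T u v = (∑ v, T z v) + ∑ u ∈ Finset.univ.erase z, ∑ v, T u v :=
        (Finset.add_sum_erase Finset.univ (fun u => ∑ v, T u v) (Finset.mem_univ z)).symm
      have e2 : ∑ u ∈ Finset.univ.erase z, T u z ≤ ∑ u ∈ Finset.univ.erase z, ∑ v, T u v :=
        Finset.sum_le_sum fun u _ => Finset.single_le_sum (fun v _ => hTnn u v) (Finset.mem_univ z)
      have e3 : ∑ u ∈ Finset.univ.erase z, T u z = ∑ u, T u z :=
        Finset.sum_erase Finset.univ hTzz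
      have e4 : ∑ u, T u z = ∑ v, T z v := Finset.sum_congr rfl fun u _ => step2 u
      have e5 : 2 * (∑ v, T z v) ≤ ∑ u, ∑ v, T u v := by
        rw [e1]
        rw [e3, e4] at e2
        linarith
      rw [← step3]
      linarith
    -- RHS bound
    have hcol : ∀ v, ∑ u, Q u v * π u = π v := by
      intro v
      rw [Finset.sum_congr rfl fun u _ => hrev u v, ← Finset.sum_mul, hrow v, one_mul]
    have hρt : ∀ u, 0 ≤ heat Q t ρ u := fun u => heat_nonneg Q hQnn ht hρnn u
    have hRHS : (1/2 : ℝ) * ∑ u, ∑ v,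
        (f v - f u)^2 * logMean (heat Q t ρ u) (heat Q t ρ v) * Q u v * π u ≤ 1/2 := by
      have hterm : ∀ u v, (f v - f u)^2 * logMean (heat Q t ρ u) (heat Q t ρ v) * Q u v * π u
          ≤ ((heat Q t ρ u + heat Q t ρ v)/2) * Q u v * π u := by
        intro u v
        by_cases hq : G.Adj u v
        · have h1 : (f v - f u)^2 ≤ 1 := hLip u v hq
          have h2 : logMean (heat Q t ρ u) (heat Q t ρ v)
              ≤ (heat Q t ρ u + heat Q t ρ v)/2 := logMean_le_half_add (hρt u) (hρt v)
          have h3 : 0 ≤ logMean (heat Q t ρ u) (heat Q t ρ v) :=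
            logMean_nonneg (hρt u) (hρt v)
          have h4 : 0 ≤ Q u v * π u := mul_nonneg (hQnn u v) (hπpos u).le
          have h5 : (f v - f u)^2 * logMean (heat Q t ρ u) (heat Q t ρ v)
              ≤ (heat Q t ρ u + heat Q t ρ v)/2 := by nlinarith
          calc (f v - f u)^2 * logMean (heat Q t ρ u) (heat Q t ρ v) * Q u v * π u
              = ((f v - f u)^2 * logMean (heat Q t ρ u) (heat Q t ρ v)) * (Q u v * π u) := by
                ring
            _ ≤ ((heat Q t ρ u + heat Q t ρ v)/2) * (Q u v * π u) :=
                mul_le_mul_of_nonneg_right h5 h4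
            _ = ((heat Q t ρ u + heat Q t ρ v)/2) * Q u v * π u := by ring
        · have hq0 : Q u v = 0 := by rw [hQ]; exact if_neg hq
          have l : (f v - f u)^2 * logMean (heat Q t ρ u) (heat Q t ρ v) * Q u v * π u = 0 := by
            rw [hq0]; ring
          have r : ((heat Q t ρ u + heat Q t ρ v)/2) * Q u v * π u = 0 := by
            rw [hq0]; ring
          rw [l, r]
      have hsum1 : ∑ u, ∑ v, ((heat Q t ρ u + heat Q t ρ v)/2) * Q u v * π u = 1 := by
        have expand : ∀ u v, ((heat Q t ρ u + heat Q t ρ v)/2) * Q u v * π u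
            = (1/2) * (heat Q t ρ u * π u) * Q u v + (1/2) * (heat Q t ρ v * (Q u v * π u)) := by
          intro u v; ring
        rw [Finset.sum_congr rfl fun u (_ : u ∈ Finset.univ) =>
          Finset.sum_congr rfl fun v (_ : v ∈ Finset.univ) => expand u v]
        rw [Finset.sum_congr rfl fun u (_ : u ∈ Finset.univ) => Finset.sum_add_distrib,
          Finset.sum_add_distrib]
        have hA1 : ∑ u, ∑ v, (1/2:ℝ) * (heat Q t ρ u * π u) * Q u v = 1/2 := by
          have inner : ∀ u, ∑ v, (1/2:ℝ) * (heat Q t ρ u * π u) * Q u v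
              = (1/2:ℝ) * (heat Q t ρ u * π u) := by
            intro u
            rw [← Finset.mul_sum, hrow u, mul_one]
          rw [Finset.sum_congr rfl fun u _ => inner u, ← Finset.mul_sum, hmean ht ρ, hnorm,
            mul_one]
        have hA2 : ∑ u, ∑ v, (1/2:ℝ) * (heat Q t ρ v * (Q u v * π u)) = 1/2 := by
          rw [Finset.sum_comm]
          have inner : ∀ v, ∑ u, (1/2:ℝ) * (heat Q t ρ v * (Q u v * π u))
              = (1/2:ℝ) * (heat Q t ρ v * π v) := by
            intro v
            have hfac : ∀ u, (1/2:ℝ) * (heat Q t ρ v * (Q u v * π u))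
                = ((1/2:ℝ) * heat Q t ρ v) * (Q u v * π u) := by intro u; ring
            rw [Finset.sum_congr rfl fun u _ => hfac u, ← Finset.mul_sum, hcol v]
            ring
          rw [Finset.sum_congr rfl fun v _ => inner v, ← Finset.mul_sum, hmean ht ρ, hnorm,
            mul_one]
        rw [hA1, hA2]
        norm_num
      have : ∑ u, ∑ v, (f v - f u)^2 * logMean (heat Q t ρ u) (heat Q t ρ v) * Q u v * π u
          ≤ 1 := by
        rw [← hsum1]
        exact Finset.sum_le_sum fun u _ => Finset.sum_le_sum fun v _ => hterm u v
      linarith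
    -- combine
    have hfinal : θ * π z * (∑ v, (heat Q t f v - heat Q t f z)^2 * Q z v)
        ≤ Real.exp (-2*κ*t) * (1/2) := by
      calc θ * π z * (∑ v, (heat Q t f v - heat Q t f z)^2 * Q z v)
          ≤ 1/2 * ∑ u, ∑ v,
            (heat Q t f v - heat Q t f u)^2 * logMean (ρ u) (ρ v) * Q u v * π u := hLHS
        _ ≤ Real.exp (-2 * κ * t) * (1/2 * ∑ u, ∑ v,
            (f v - f u)^2 * logMean (heat Q t ρ u) (heat Q t ρ v) * Q u v * π u) := key
        _ ≤ Real.exp (-2*κ*t) * (1/2) := by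
            apply mul_le_mul_of_nonneg_left hRHS (Real.exp_pos _).le
    have hΓnn : 0 ≤ ∑ v, (heat Q t f v - heat Q t f z)^2 * Q z v :=
      Finset.sum_nonneg fun v _ => mul_nonneg (sq_nonneg _) (hQnn z v)
    have h5 : (((D:ℝ)-1)/(2*((D:ℝ)*Real.log D)))
        * (∑ v, (heat Q t f v - heat Q t f z)^2 * Q z v) ≤ Real.exp (-2*κ*t) * (1/2) :=
      le_trans (mul_le_mul_of_nonneg_right hθπ hΓnn) hfinal
    have h6 : (((D:ℝ)-1)/(2*((D:ℝ)*Real.log D))) = 1/(2*M) := by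
      rw [hM]
      have l1 : Real.log (D:ℝ) ≠ 0 := hlogD.ne'
      have l2 : (D:ℝ) ≠ 0 := hDpos.ne'
      have l3 : (D:ℝ)-1 ≠ 0 := by linarith
      field_simp
    rw [h6] at h5
    have hMne : (0:ℝ) < 2*M := by positivity
    calc ∑ v, (heat Q t f v - heat Q t f z)^2 * Q z v
        = (1/(2*M) * (∑ v, (heat Q t f v - heat Q t f z)^2 * Q z v)) * (2*M) := by
          field_simp
      _ ≤ (Real.exp (-2*κ*t) * (1/2)) * (2*M) := mul_le_mul_of_nonneg_right h5 hMne.le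
      _ = Real.exp (-2*κ*t) * M := by ring
  -- choose the extremal pair and the distance function
  have : Nonempty X := ⟨Classical.arbitrary X⟩
  obtain ⟨x, y, hxy⟩ := G.exists_dist_eq_diam
  set f : X → ℝ := fun w => (G.dist x w : ℝ) with hf
  have hLipAbs : ∀ u v : X, G.Adj u v → |f v - f u| ≤ 1 := by
    intro u v huv
    have h1 : G.dist x v ≤ G.dist x u + 1 := by
      have h := hconn.dist_triangle (u := x) (v := u) (w := v)
      rwa [SimpleGraph.dist_eq_one_iff_adj.mpr huv] at h
    have h2 : G.dist x u ≤ G.dist x v + 1 := by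
      have h := hconn.dist_triangle (u := x) (v := v) (w := u)
      rwa [SimpleGraph.dist_eq_one_iff_adj.mpr huv.symm] at h
    rw [abs_le]
    constructor
    · have : (G.dist x u : ℝ) ≤ (G.dist x v : ℝ) + 1 := by exact_mod_cast h2
      simp only [hf]
      linarith
    · have : (G.dist x v : ℝ) ≤ (G.dist x u : ℝ) + 1 := by exact_mod_cast h1
      simp only [hf]
      linarith
  have hLip : ∀ u v : X, G.Adj u v → (f v - f u)^2 ≤ 1 := by
    intro u v huv
    have h := hLipAbs u v huv
    have h2 : |f v - f u|^2 ≤ 1 := by nlinarith [abs_nonneg (f v - f u)]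
    rwa [sq_abs] at h2
  -- pointwise laplacian bound
  have hΔ : ∀ (z : X) (t : ℝ), 0 ≤ t →
      |∑ w, (heat Q t f w - heat Q t f z) * Q z w| ≤ Real.sqrt M * Real.exp (-κ*t) := by
    intro z t ht
    have hCS : (∑ w, (heat Q t f w - heat Q t f z) * Q z w)^2
        ≤ (∑ w, (heat Q t f w - heat Q t f z)^2 * Q z w) * (∑ w, Q z w) := by
      have h := Finset.sum_mul_sq_le_sq_mul_sq Finset.univ
        (fun w => (heat Q t f w - heat Q t f z) * Real.sqrt (Q z w))
        (fun w => Real.sqrt (Q z w))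
      have e1 : ∀ w : X, ((heat Q t f w - heat Q t f z) * Real.sqrt (Q z w))
          * Real.sqrt (Q z w) = (heat Q t f w - heat Q t f z) * Q z w := by
        intro w; rw [mul_assoc, Real.mul_self_sqrt (hQnn z w)]
      have e2 : ∀ w : X, ((heat Q t f w - heat Q t f z) * Real.sqrt (Q z w))^2
          = (heat Q t f w - heat Q t f z)^2 * Q z w := by
        intro w; rw [mul_pow, Real.sq_sqrt (hQnn z w)]
      have e3 : ∀ w : X, (Real.sqrt (Q z w))^2 = Q z w := fun w => Real.sq_sqrt (hQnn z w)
      rw [Finset.sum_congr rfl fun w _ => e1 w, Finset.sum_congr rfl fun w _ => e2 w,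
        Finset.sum_congr rfl fun w _ => e3 w] at h
      exact h
    rw [hrow z, mul_one] at hCS
    have hb := le_trans hCS (core f hLip z t ht)
    have hsq : Real.sqrt M * Real.exp (-κ*t) = Real.sqrt (Real.exp (-2*κ*t) * M) := by
      rw [Real.sqrt_mul (Real.exp_pos _).le]
      have : Real.sqrt (Real.exp (-2*κ*t)) = Real.exp (-κ*t) := by
        have h : Real.exp (-2*κ*t) = (Real.exp (-κ*t))^2 := by
          rw [sq, ← Real.exp_add]; ring_nf
        rw [h, Real.sqrt_sq (Real.exp_pos _).le]
      rw [this]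
      ring
    rw [hsq]
    rw [← Real.sqrt_sq_eq_abs]
    exact Real.sqrt_le_sqrt hb
  -- edge bound for the heat evolved function
  have hedge : ∀ (t : ℝ), 0 ≤ t → ∀ u v : X, G.Adj u v →
      |heat Q t f v - heat Q t f u| ≤ Real.sqrt ((D:ℝ)*M) * Real.exp (-κ*t) := by
    intro t ht u v hadj
    have h1 : (heat Q t f v - heat Q t f u)^2 * Q u v
        ≤ ∑ w, (heat Q t f w - heat Q t f u)^2 * Q u w :=
      Finset.single_le_sum (f := fun w => (heat Q t f w - heat Q t f u)^2 * Q u w)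
        (fun w _ => mul_nonneg (sq_nonneg _) (hQnn u w)) (Finset.mem_univ v)
    have h1' := le_trans h1 (core f hLip u t ht)
    have hquv : Q u v = ((G.degree u : ℝ))⁻¹ := by rw [hQ, if_pos hadj]
    have hdpos : (0:ℝ) < (G.degree u : ℝ) := by exact_mod_cast hdegpos u
    have h2 : (heat Q t f v - heat Q t f u)^2
        ≤ Real.exp (-2*κ*t) * M * (G.degree u : ℝ) := by
      have := mul_le_mul_of_nonneg_right h1' hdpos.le
      rw [hquv] at this
      rw [mul_assoc, inv_mul_cancel₀ hdpos.ne', mul_one] at this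
      exact this
    have h3 : (heat Q t f v - heat Q t f u)^2 ≤ Real.exp (-2*κ*t) * M * (D:ℝ) := by
      have := mul_le_mul_of_nonneg_left (hDdeg u) (by positivity :
        (0:ℝ) ≤ Real.exp (-2*κ*t) * M)
      linarith
    have hsq : (Real.sqrt ((D:ℝ)*M) * Real.exp (-κ*t))^2 = Real.exp (-2*κ*t) * M * (D:ℝ) := by
      rw [mul_pow, Real.sq_sqrt (by positivity : (0:ℝ) ≤ (D:ℝ)*M)]
      have h : (Real.exp (-κ*t))^2 = Real.exp (-2*κ*t) := by
        rw [sq, ← Real.exp_add]; ring_nf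
      rw [h]
      ring
    rw [← Real.sqrt_sq_eq_abs]
    rw [show Real.sqrt ((D:ℝ)*M) * Real.exp (-κ*t)
      = Real.sqrt ((Real.sqrt ((D:ℝ)*M) * Real.exp (-κ*t))^2) from
      (Real.sqrt_sq (by positivity)).symm]
    apply Real.sqrt_le_sqrt
    rw [hsq]
    exact h3
  -- walk bound
  obtain ⟨p, hp⟩ := hconn.exists_walk_length_eq_dist x y
  set L : ℝ := (G.diam : ℝ) with hL
  have hLpos : 0 < L := by
    rw [hL]
    exact_mod_cast Nat.pos_of_ne_zero hdiam
  have hwalk : ∀ (t : ℝ), 0 ≤ t →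
      |heat Q t f y - heat Q t f x| ≤ L * (Real.sqrt ((D:ℝ)*M) * Real.exp (-κ*t)) := by
    intro t ht
    have := walk_abs_bound (G := G) (fun w => heat Q t f w)
      (Real.sqrt ((D:ℝ)*M) * Real.exp (-κ*t)) (fun u v h => hedge t ht u v h) p
    have hlen : (p.length : ℝ) = L := by
      rw [hp, hL, hxy]
    rwa [hlen] at this
  -- the monotonicity argument
  set C : ℝ := 2 * Real.sqrt M / κ with hC
  have hCnn : 0 ≤ C := by positivity
  have hφd : ∀ t : ℝ, HasDerivAt (fun s => heat Q s f y - heat Q s f x)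
      ((∑ w, (heat Q t f w - heat Q t f y) * Q y w)
        - (∑ w, (heat Q t f w - heat Q t f x) * Q x w)) t :=
    fun t => (heat_hasDerivAt Q hrow f y t).sub (heat_hasDerivAt Q hrow f x t)
  have hexpd : ∀ t : ℝ, HasDerivAt (fun s => C * Real.exp (-κ*s)) (-(2 * Real.sqrt M) * Real.exp (-κ*t)) t := by
    intro t
    have h1 : HasDerivAt (fun s : ℝ => -κ*s) (-κ) t := by
      simpa using (hasDerivAt_id t).const_mul (-κ)
    have h2 : HasDerivAt (fun s : ℝ => Real.exp (-κ*s)) (Real.exp (-κ*t) * (-κ)) t :=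
      (Real.hasDerivAt_exp (-κ*t)).comp t h1
    have h3 := h2.const_mul C
    refine h3.congr_deriv (Eq.symm ?_)
    rw [hC]
    field_simp
  have hmono : MonotoneOn (fun s => (heat Q s f y - heat Q s f x) - C * Real.exp (-κ*s))
      (Set.Ici 0) := by
    have hd : ∀ t : ℝ, HasDerivAt (fun s => (heat Q s f y - heat Q s f x) - C * Real.exp (-κ*s))
        (((∑ w, (heat Q t f w - heat Q t f y) * Q y w)
          - (∑ w, (heat Q t f w - heat Q t f x) * Q x w))
          - (-(2 * Real.sqrt M) * Real.exp (-κ*t))) t :=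
      fun t => (hφd t).sub (hexpd t)
    apply monotoneOn_of_deriv_nonneg (convex_Ici 0)
    · exact continuousOn_of_forall_continuousAt fun s _ => (hd s).continuousAt
    · intro s hs
      exact (hd s).differentiableAt.differentiableWithinAt
    · intro s hs
      rw [interior_Ici] at hs
      have hs0 : (0:ℝ) ≤ s := le_of_lt hs
      rw [(hd s).deriv]
      have b1 := hΔ y s hs0
      have b2 := hΔ x s hs0
      have := abs_le.mp b1
      have := abs_le.mp b2
      have e1 := (abs_le.mp b1).1
      have e2 := (abs_le.mp b2).2
      nlinarith [e1, e2]
  have hkey : ∀ T : ℝ, 0 ≤ T → L ≤ L * (Real.sqrt ((D:ℝ)*M) * Real.exp (-κ*T)) + C := by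
    intro T hT
    have hm := hmono (Set.self_mem_Ici) (Set.mem_Ici.mpr hT) hT
    simp only at hm
    have hzero : heat Q 0 f y - heat Q 0 f x = L := by
      rw [heat_zero]
      show (G.dist x y : ℝ) - (G.dist x x : ℝ) = L
      rw [SimpleGraph.dist_self, hxy, hL]
      simp
    rw [hzero] at hm
    have hexp0 : Real.exp (-κ*(0:ℝ)) = 1 := by norm_num
    rw [hexp0, mul_one] at hm
    have hTbound := hwalk T hT
    have h1 : heat Q T f y - heat Q T f x ≤ L * (Real.sqrt ((D:ℝ)*M) * Real.exp (-κ*T)) :=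
      le_trans (le_abs_self _) hTbound
    have h2 : 0 ≤ C * Real.exp (-κ*T) := by positivity
    linarith
  -- take the limit T → ∞
  have hlim : Filter.Tendsto
      (fun T : ℝ => L * (Real.sqrt ((D:ℝ)*M) * Real.exp (-κ*T)) + C)
      Filter.atTop (nhds C) := by
    have h1 : Filter.Tendsto (fun T : ℝ => Real.exp (-κ*T)) Filter.atTop (nhds 0) := by
      have h2 : Filter.Tendsto (fun T : ℝ => κ * T) Filter.atTop Filter.atTop :=
        Filter.Tendsto.const_mul_atTop hκ Filter.tendsto_id
      have h3 := Real.tendsto_exp_neg_atTop_nhds_zero.comp h2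
      have : (fun T : ℝ => Real.exp (-(κ*T))) = fun T : ℝ => Real.exp (-κ*T) := by
        funext T; ring_nf
      rwa [show ((fun x => Real.exp (-x)) ∘ fun T : ℝ => κ * T)
        = fun T : ℝ => Real.exp (-(κ*T)) from rfl, this] at h3
    have h4 := ((h1.const_mul (Real.sqrt ((D:ℝ)*M))).const_mul L).add_const C
    simp only [mul_zero, zero_add] at h4
    convert h4 using 2
    
  have hfin : L ≤ C :=
    ge_of_tendsto hlim (Filter.eventually_atTop.mpr ⟨0, fun T hT => hkey T hT⟩)
  rw [hC] at hfin
  calc (G.diam : ℝ) = L := hL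
    _ ≤ 2 * Real.sqrt M / κ := hfin
    _ = (2/κ) * Real.sqrt (D * Real.log D / ((D:ℝ) - 1)) := by
        rw [hM]
        ring
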